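/- Let N be a finitely generated torsion-free nilpotent group whose rational Malcev completion has no abelian direct factor. Then the center Z(N) is contained in the isolator of the commutator subgroup, √[N](γ₂(N)) = {g ∈ N | ∃ n ≥ 1, g^n ∈ [N,N]}. -/

import Mathlib

universe u v

open scoped commutatorElement

/-- A monoid is torsion-free if no nontrivial element has finite order. -/
def Monoid.IsTorsionFree (G : Type*) [Monoid G] : Prop :=
  ∀ g : G, g ≠ 1 → ¬IsOfFinOrder g

/-- `ι : N →* M` realizes `M` as the rational Malcev completion of `N`: `M` is a
torsion-free nilpotent group into which `N` embeds, every element of `M` has a unique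
`k`-th root for every `k ≥ 1`, and every element of `M` has some positive power lying in
(the image of) `N`. -/
structure IsRationalMalcevCompletion {N M : Type*} [Group N] [Group M] (ι : N →* M) :
    Prop where
  nilpotent : Group.IsNilpotent M
  torsionFree : Monoid.IsTorsionFree M
  injective : Function.Injective ι
  uniqueRoots : ∀ (m : M) (k : ℕ), 0 < k → ∃! x : M, x ^ k = m
  cofinal : ∀ m : M, ∃ k : ℕ, 0 < k ∧ m ^ k ∈ MonoidHom.range ι

/-- A group has no abelian direct factor if whenever it is isomorphic to `A × B` with `A`
abelian, `A` is trivial. -/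
def NoAbelianDirectFactor (G : Type u) [Group G] : Prop :=
  ∀ (A B : Type u) (_ : Group A) (_ : Group B),
    Nonempty (G ≃* A × B) → (∀ a b : A, a * b = b * a) → Subsingleton A


section Helpers

variable {G : Type*} [Group G]

/-- If `c = ⁅a,b⁆` is central, then `a^p * b^q = c^(p*q) * (b^q * a^p)`. -/
private lemma cen_comm_pow {a b c : G} (h : a * b = c * (b * a))
    (hc : ∀ x : G, Commute c x) (p q : ℕ) :
    a ^ p * b ^ q = c ^ (p * q) * (b ^ q * a ^ p) := by
  have hp : ∀ n : ℕ, a ^ n * b = c ^ n * (b * a ^ n) := by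
    intro n
    induction n with
    | zero => simp
    | succ n ih =>
      calc a ^ (n + 1) * b = a * (a ^ n * b) := by rw [pow_succ']; group
        _ = a * (c ^ n * (b * a ^ n)) := by rw [ih]
        _ = (a * c ^ n) * (b * a ^ n) := by group
        _ = (c ^ n * a) * (b * a ^ n) := by rw [((hc a).pow_left n).eq]
        _ = c ^ n * (a * b) * a ^ n := by group
        _ = c ^ n * (c * (b * a)) * a ^ n := by rw [h]
        _ = c ^ (n + 1) * (b * a ^ (n + 1)) := by rw [pow_succ, pow_succ']; group
  induction q with
  | zero => simp
  | succ q ih =>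
    calc a ^ p * b ^ (q + 1) = (a ^ p * b ^ q) * b := by rw [pow_succ]; group
      _ = c ^ (p * q) * (b ^ q * (a ^ p * b)) := by rw [ih]; group
      _ = c ^ (p * q) * (b ^ q * (c ^ p * (b * a ^ p))) := by rw [hp p]
      _ = c ^ (p * q) * ((b ^ q * c ^ p) * (b * a ^ p)) := by group
      _ = c ^ (p * q) * ((c ^ p * b ^ q) * (b * a ^ p)) := by
          rw [((hc (b ^ q)).pow_left p).eq]
      _ = (c ^ (p * q) * c ^ p) * (b ^ (q + 1) * a ^ p) := by rw [pow_succ']; group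
      _ = c ^ (p * (q + 1)) * (b ^ (q + 1) * a ^ p) := by
          rw [← pow_add, Nat.mul_succ]

private lemma conj_pow_eq (g x : G) (n : ℕ) :
    (g * x * g⁻¹) ^ n = g * x ^ n * g⁻¹ := by
  induction n with
  | zero => simp
  | succ n ih => rw [pow_succ, pow_succ, ih]; group

private lemma comm_mul_central {s ε t : G} (hε : ∀ x : G, Commute ε x) :
    ⁅s * ε, t⁆ = ⁅s, t⁆ := by
  rw [commutatorElement_def, commutatorElement_def, mul_inv_rev]
  calc s * ε * t * (ε⁻¹ * s⁻¹) * t⁻¹ = s * (ε * t * ε⁻¹) * s⁻¹ * t⁻¹ := by group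
    _ = s * (t * ε * ε⁻¹) * s⁻¹ * t⁻¹ := by rw [(hε t).eq]
    _ = s * t * s⁻¹ * t⁻¹ := by group

private lemma quot_commute {K : Subgroup G} [K.Normal] {a b : G}
    (h : ⁅b⁻¹, a⁻¹⁆ ∈ K) :
    Commute (QuotientGroup.mk' K a) (QuotientGroup.mk' K b) := by
  have : ((a * b : G) : G ⧸ K) = ((b * a : G) : G ⧸ K) := by
    rw [QuotientGroup.eq]
    have : (a * b)⁻¹ * (b * a) = ⁅b⁻¹, a⁻¹⁆ := by
      rw [commutatorElement_def]; group
    rwa [this]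
  simpa [QuotientGroup.mk'_apply, Commute, SemiconjBy] using this

end Helpers

section Malcev

variable {N : Type u} {M : Type v} [Group N] [Group M]

private lemma pow_left_inj' {ι : N →* M} (hι : IsRationalMalcevCompletion ι)
    {x y : M} {k : ℕ} (hk : 0 < k) (h : x ^ k = y ^ k) : x = y := by
  obtain ⟨r, -, hr⟩ := hι.uniqueRoots (y ^ k) k hk
  rw [hr x h, hr y rfl]

private lemma malcev_R {ι : N →* M} (hι : IsRationalMalcevCompletion ι) :
    ∀ i : ℕ, ∀ x ∈ Subgroup.lowerCentralSeries (⊤ : Subgroup M) i, ∃ k : ℕ, 0 < k ∧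
      ∃ y ∈ Subgroup.lowerCentralSeries (⊤ : Subgroup N) i, ∃ e ∈ Subgroup.lowerCentralSeries (⊤ : Subgroup M) (i + 1),
        x ^ k = ι y * e := by
  intro i
  induction i with
  | zero =>
    intro x _
    obtain ⟨k, hk, n, hn⟩ := hι.cofinal x
    exact ⟨k, hk, n, Subgroup.mem_top n, 1, Subgroup.one_mem _, by rw [← hn, mul_one]⟩
  | succ i ih =>
    intro x hx
    set K := Subgroup.lowerCentralSeries (⊤ : Subgroup M) (i + 2) with hK
    let π : M →* M ⧸ K := QuotientGroup.mk' K
    -- elements of `lowerCentralSeries (⊤ : Subgroup M) (i+1)` become central in the quotient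
    have hcent : ∀ w ∈ Subgroup.lowerCentralSeries (⊤ : Subgroup M) (i + 1), ∀ r : M ⧸ K, Commute (π w) r := by
      intro w hw r
      induction r using QuotientGroup.induction_on with
      | H g =>
        refine quot_commute ?_
        have h1 : ⁅w⁻¹, g⁻¹⁆ ∈ K := by
          refine Subgroup.commutator_mem_commutator (inv_mem hw) (Subgroup.mem_top _)
        have h2 : ⁅g⁻¹, w⁻¹⁆ = ⁅w⁻¹, g⁻¹⁆⁻¹ := (commutatorElement_inv _ _).symm
        rw [h2]
        exact inv_mem h1
    -- the subgroup of "good" elements of the quotient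
    let H : Subgroup (M ⧸ K) :=
      { carrier := {q | (∀ r, Commute q r) ∧ ∃ k : ℕ, 0 < k ∧
          ∃ y ∈ Subgroup.lowerCentralSeries (⊤ : Subgroup N) (i + 1), q ^ k = π (ι y)}
        one_mem' := ⟨fun r => Commute.one_left r,
          1, one_pos, 1, Subgroup.one_mem _, by simp⟩
        mul_mem' := by
          rintro q r ⟨hqc, k, hk, y, hy, hqk⟩ ⟨hrc, l, hl, y', hy', hrl⟩
          refine ⟨fun s => (hqc s).mul_left (hrc s), k * l, Nat.mul_pos hk hl,
            y ^ l * y' ^ k, mul_mem (pow_mem hy l) (pow_mem hy' k), ?_⟩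
          have e1 : q ^ (k * l) = π (ι (y ^ l)) := by
            rw [pow_mul, hqk, ← map_pow, ← map_pow]
          have e2 : r ^ (k * l) = π (ι (y' ^ k)) := by
            rw [mul_comm k l, pow_mul, hrl, ← map_pow, ← map_pow]
          rw [(hqc r).mul_pow, e1, e2, ← map_mul, ← map_mul]
        inv_mem' := by
          rintro q ⟨hqc, k, hk, y, hy, hqk⟩
          exact ⟨fun s => (hqc s).inv_left, k, hk, y⁻¹, inv_mem hy,
            by simp [inv_pow, hqk]⟩ }
    have key : Subgroup.lowerCentralSeries (⊤ : Subgroup M) (i + 1) ≤ H.comap π := by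
      show ⁅lowerCentralSeries (⊤ : Subgroup M) i, (⊤ : Subgroup M)⁆ ≤ H.comap π
      rw [Subgroup.commutator_le]
      intro a ha b _
      have hcomm : ∀ r, Commute (π ⁅a, b⁆) r :=
        hcent ⁅a, b⁆ (Subgroup.commutator_mem_commutator ha (Subgroup.mem_top b)) 
      obtain ⟨p, hp, y, hy, e, he, hap⟩ := ih a ha
      obtain ⟨q', hq', n, hn⟩ := hι.cofinal b
      have hcmap : π ⁅a, b⁆ = ⁅π a, π b⁆ := map_commutatorElement π a b
      have hab : π a * π b = π ⁅a, b⁆ * (π b * π a) := by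
        rw [hcmap, commutatorElement_def]; group
      have h1 : (π a) ^ p * (π b) ^ q' = (π ⁅a, b⁆) ^ (p * q') * ((π b) ^ q' * (π a) ^ p) :=
        cen_comm_pow hab hcomm p q'
      have h2 : ⁅(π a) ^ p, (π b) ^ q'⁆ = (π ⁅a, b⁆) ^ (p * q') := by
        rw [commutatorElement_def, h1]; group
      have hπe : ∀ r, Commute (π e) r := hcent e he
      have h3 : (π a) ^ p = π (ι y) * π e := by
        rw [← map_pow, hap, map_mul]
      have h4 : (π b) ^ q' = π (ι n) := by rw [← map_pow, ← hn]
      have h5 : ⁅(π a) ^ p, (π b) ^ q'⁆ = π (ι ⁅y, n⁆) := by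
        rw [h3, h4, comm_mul_central hπe, ← map_commutatorElement,
          ← map_commutatorElement]
      refine Subgroup.mem_comap.mpr ⟨hcomm, p * q', Nat.mul_pos hp hq',
        ⁅y, n⁆, Subgroup.commutator_mem_commutator hy (Subgroup.mem_top n), ?_⟩
      rw [← h2, h5]
    obtain ⟨-, k, hk, y, hy, hxk⟩ := Subgroup.mem_comap.mp (key hx)
    refine ⟨k, hk, y, hy, (ι y)⁻¹ * x ^ k, ?_, by group⟩
    have h6 : π ((ι y)⁻¹ * x ^ k) = 1 := by
      rw [map_mul, map_inv, map_pow, ← hxk]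
      group
    have := MonoidHom.mem_ker.mpr h6
    rwa [QuotientGroup.ker_mk'] at this

private lemma malcev_S {ι : N →* M} (hι : IsRationalMalcevCompletion ι) (i : ℕ) :
    ∀ t : ℕ, ∀ x ∈ Subgroup.lowerCentralSeries (⊤ : Subgroup M) i, ∃ k : ℕ, 0 < k ∧
      ∃ y ∈ Subgroup.lowerCentralSeries (⊤ : Subgroup N) i, ∃ e ∈ Subgroup.lowerCentralSeries (⊤ : Subgroup M) (i + t),
        x ^ k = ι y * e := by
  intro t
  induction t with
  | zero =>
    intro x hx
    exact ⟨1, one_pos, 1, Subgroup.one_mem _, x, by simpa using hx, by simp⟩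
  | succ t ih =>
    intro x hx
    obtain ⟨k, hk, y, hy, e, he, hxk⟩ := ih x hx
    obtain ⟨l, hl, w, hw, f, hf, hel⟩ := malcev_R hι (i + t) e he
    set K := Subgroup.lowerCentralSeries (⊤ : Subgroup M) (i + t + 1) with hKdef
    let π : M →* M ⧸ K := QuotientGroup.mk' K
    have hιy : ι y ∈ Subgroup.lowerCentralSeries (⊤ : Subgroup M) i :=
      lowerCentralSeries.map ι i (Subgroup.mem_map.mpr ⟨y, hy, rfl⟩)
    have hcomm : Commute (π (ι y)) (π e) := by
      refine quot_commute ?_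
      exact Subgroup.commutator_mem_commutator (inv_mem he) (Subgroup.mem_top _)
    have hπf : π f = 1 := by
      have := (QuotientGroup.eq_one_iff f).mpr hf
      simpa [π] using this
    have h1 : π (x ^ (k * l)) = π (ι (y ^ l * w)) := by
      have e0 : (x ^ k) ^ l = (ι y * e) ^ l := by rw [hxk]
      calc π (x ^ (k * l)) = (π (ι y) * π e) ^ l := by
            rw [pow_mul, e0, map_pow, map_mul]
        _ = (π (ι y)) ^ l * (π e) ^ l := hcomm.mul_pow l
        _ = π (ι (y ^ l * w)) := by
            have eA : (π (ι y)) ^ l = π (ι (y ^ l)) := by rw [← map_pow, ← map_pow]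
            have eB : (π e) ^ l = π (ι w) * π f := by rw [← map_pow, hel, map_mul]
            rw [eA, eB, hπf, mul_one, ← map_mul, ← map_mul]
    have h2 : π ((ι (y ^ l * w))⁻¹ * x ^ (k * l)) = 1 := by
      rw [map_mul, map_inv, h1]; group
    have h3 : (ι (y ^ l * w))⁻¹ * x ^ (k * l) ∈ K := by
      have := MonoidHom.mem_ker.mpr h2
      rwa [QuotientGroup.ker_mk'] at this
    have hwi : w ∈ Subgroup.lowerCentralSeries (⊤ : Subgroup N) i :=
      lowerCentralSeries_antitone _ (Nat.le_add_right i t) hw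
    refine ⟨k * l, Nat.mul_pos hk hl, y ^ l * w, mul_mem (pow_mem hy l) hwi,
      (ι (y ^ l * w))⁻¹ * x ^ (k * l), h3, by group⟩

/-- Key fact: every element of `[M,M]` has a positive power lying in `ι([N,N])`. -/
private lemma malcev_key {ι : N →* M} (hι : IsRationalMalcevCompletion ι)
    {x : M} (hx : x ∈ commutator M) :
    ∃ k : ℕ, 0 < k ∧ ∃ y ∈ commutator N, x ^ k = ι y := by
  obtain ⟨c, hc⟩ := nilpotent_iff_lowerCentralSeries.mp hι.nilpotent
  have hx1 : x ∈ Subgroup.lowerCentralSeries (⊤ : Subgroup M) 1 := by rwa [lowerCentralSeries_one]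
  obtain ⟨k, hk, y, hy, e, he, hxk⟩ := malcev_S hι 1 c x hx1
  have he1 : e = 1 := by
    have : Subgroup.lowerCentralSeries (⊤ : Subgroup M) (1 + c) ≤ Subgroup.lowerCentralSeries (⊤ : Subgroup M) c :=
      lowerCentralSeries_antitone _ (Nat.le_add_left c 1)
    have := this he
    rw [hc] at this
    simpa using this
  refine ⟨k, hk, y, by rwa [lowerCentralSeries_one] at hy, by rw [hxk, he1, mul_one]⟩

end Malcev

/-- For a f.g. group `N` and `z` with no positive power in `[N,N]`, there is an additive
integer-valued functional nonvanishing at `z` and vanishing on the isolator of `[N,N]`. -/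
private lemma exists_functional {N : Type u} [Group N] (hfg : Group.FG N) (z : N)
    (hz : ¬ ∃ n : ℕ, 0 < n ∧ z ^ n ∈ commutator N) :
    ∃ φ : N → ℤ, (∀ a b : N, φ (a * b) = φ a + φ b) ∧ φ z ≠ 0 ∧
      (∀ w : N, (∃ k : ℕ, 0 < k ∧ w ^ k ∈ commutator N) → φ w = 0) := by
  classical
  haveI := hfg
  set T := CommGroup.torsion (Abelianization N) with hT
  let θ : N →* Abelianization N ⧸ T := (QuotientGroup.mk' T).comp Abelianization.of
  have hofsurj : Function.Surjective (Abelianization.of : N →* Abelianization N) := by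
    intro q
    induction q using QuotientGroup.induction_on with
    | H g => exact ⟨g, rfl⟩
  have hθsurj : Function.Surjective θ :=
    (QuotientGroup.mk'_surjective T).comp hofsurj
  have hker : ∀ w : N, θ w = 1 ↔ ∃ k : ℕ, 0 < k ∧ w ^ k ∈ commutator N := by
    intro w
    have hof : ∀ v : N, Abelianization.of v = 1 ↔ v ∈ commutator N := fun v =>
      QuotientGroup.eq_one_iff v
    constructor
    · intro h
      have h1 : Abelianization.of w ∈ T := by
        have := (QuotientGroup.eq_one_iff (Abelianization.of w)).mp h
        exact this
      obtain ⟨k, hk, hk1⟩ := isOfFinOrder_iff_pow_eq_one.mp h1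
      exact ⟨k, hk, (hof (w ^ k)).mp (by rw [map_pow, hk1])⟩
    · rintro ⟨k, hk, hkmem⟩
      have h1 : (Abelianization.of w) ^ k = 1 := by
        rw [← map_pow]
        exact (hof (w ^ k)).mpr hkmem
      have h2 : Abelianization.of w ∈ T :=
        isOfFinOrder_iff_pow_eq_one.mpr ⟨k, hk, h1⟩
      exact (QuotientGroup.eq_one_iff (Abelianization.of w)).mpr h2
  -- the quotient is a f.g. torsion-free abelian group, hence free
  haveI : Group.FG (Abelianization N ⧸ T) := Group.fg_of_surjective hθsurj
  have htf : Monoid.IsTorsionFree (Abelianization N ⧸ T) :=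
    fun g hg => isMulTorsionFree_iff_not_isOfFinOrder.mp inferInstance hg
  haveI : Module.Finite ℤ (Additive (Abelianization N ⧸ T)) :=
    Module.Finite.iff_addGroup_fg.mpr inferInstance
  haveI : NoZeroSMulDivisors ℤ (Additive (Abelianization N ⧸ T)) := by
    infer_instance
  haveI : Module.Free ℤ (Additive (Abelianization N ⧸ T)) :=
    Module.free_of_finite_type_torsion_free'
  let b := Module.Free.chooseBasis ℤ (Additive (Abelianization N ⧸ T))
  have haz : Additive.ofMul (θ z) ≠ 0 := by
    intro h
    refine hz ((hker z).mp ?_)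
    simpa using h
  have hrepr : b.repr (Additive.ofMul (θ z)) ≠ 0 := by
    intro h
    exact haz (by simpa using congrArg b.repr.symm h)
  obtain ⟨idx, hidx⟩ := Finsupp.ne_iff.mp hrepr
  refine ⟨fun w => b.repr (Additive.ofMul (θ w)) idx, ?_, ?_, ?_⟩
  · intro a c
    show b.repr (Additive.ofMul (θ (a * c))) idx
        = b.repr (Additive.ofMul (θ a)) idx + b.repr (Additive.ofMul (θ c)) idx
    rw [map_mul θ]
    have h0 : Additive.ofMul (θ a * θ c) = Additive.ofMul (θ a) + Additive.ofMul (θ c) := rfl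
    rw [h0, map_add]
    simp
  · simpa using hidx
  · intro w hw
    show b.repr (Additive.ofMul (θ w)) idx = 0
    rw [(hker w).mpr hw]
    simp

/-- If the rational Malcev completion of a finitely generated torsion-free nilpotent group
`N` has no abelian direct factor, then `Z(N)` is contained in the isolator of the
commutator subgroup `√[N](γ₂(N)) = {g ∈ N | ∃ n ≥ 1, g^n ∈ [N,N]}`. -/
theorem center_le_isolator_commutator (N : Type u) (M : Type v) [Group N] [Group M]
    (hfg : Group.FG N) (htf : Monoid.IsTorsionFree N) [Group.IsNilpotent N]
    (ι : N →* M) (hι : IsRationalMalcevCompletion ι)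
    (hno : NoAbelianDirectFactor M) :
    (Subgroup.center N : Set N) ⊆ {g : N | ∃ n : ℕ, 0 < n ∧ g ^ n ∈ commutator N} := by
  intro z hzmem
  by_contra hcon
  simp only [Set.mem_setOf_eq] at hcon
  obtain ⟨φ, hφadd, hφz, hφvan⟩ := exists_functional hfg z hcon
  -- basic properties of φ
  have hφone : φ 1 = 0 := by have := hφadd 1 1; simp at this; linarith
  have hφpow : ∀ (x : N) (a : ℕ), φ (x ^ a) = (a : ℤ) * φ x := by
    intro x a
    induction a with
    | zero => simpa using hφone
    | succ a ih => rw [pow_succ, hφadd, ih]; push_cast; ring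
  have hφinv : ∀ x : N, φ x⁻¹ = - φ x := by
    intro x
    have h := hφadd x x⁻¹
    rw [mul_inv_cancel, hφone] at h
    linarith
  -- torsion-freeness of M
  have hTF : ∀ (x : M) (k : ℕ), 0 < k → x ^ k = 1 → x = 1 := by
    intro x k hk h
    by_contra hx
    exact hι.torsionFree x hx (isOfFinOrder_iff_pow_eq_one.mpr ⟨k, hk, h⟩)
  set ζ := ι z with hζdef
  have hzc : ∀ g : N, g * z = z * g := Subgroup.mem_center_iff.mp hzmem
  -- ζ is central in M
  have hζc : ∀ m : M, Commute ζ m := by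
    intro m
    obtain ⟨q, hq, n, hn⟩ := hι.cofinal m
    have h1 : ζ * m ^ q = m ^ q * ζ := by
      rw [← hn, ← map_mul, ← map_mul, hzc n]
    have h3 : (ζ * m * ζ⁻¹) ^ q = m ^ q := by
      rw [conj_pow_eq, h1]; group
    have h4 : ζ * m * ζ⁻¹ = m := pow_left_inj' hι hq h3
    show ζ * m = m * ζ
    calc ζ * m = (ζ * m * ζ⁻¹) * ζ := by group
      _ = m * ζ := by rw [h4]
  -- choice of cofinal data
  have hcof : ∀ m : M, ∃ k : ℕ, 0 < k ∧ ∃ n : N, ι n = m ^ k := by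
    intro m
    obtain ⟨k, hk, n, hn⟩ := hι.cofinal m
    exact ⟨k, hk, n, hn⟩
  choose kF hkF nF hnF using hcof
  set ψ : M → ℚ := fun m => (φ (nF m) : ℚ) / (kF m) with hψdef
  have hkQ : ∀ m : M, ((kF m : ℚ)) ≠ 0 := fun m => Nat.cast_ne_zero.mpr (hkF m).ne'
  have hψ_eq : ∀ (m : M) (s : ℕ) (u : N), 0 < s → ι u = m ^ s → ψ m = (φ u : ℚ) / s := by
    intro m s u hs hu
    have h1 : ι (u ^ kF m) = ι (nF m ^ s) := by
      rw [map_pow, map_pow, hu, hnF m, ← pow_mul, ← pow_mul, mul_comm]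
    have h2 : u ^ kF m = nF m ^ s := hι.injective h1
    have h3 : (kF m : ℤ) * φ u = (s : ℤ) * φ (nF m) := by
      have h := congrArg φ h2
      rwa [hφpow, hφpow] at h
    show (φ (nF m) : ℚ) / kF m = (φ u : ℚ) / s
    rw [div_eq_div_iff (hkQ m) (Nat.cast_ne_zero.mpr hs.ne')]
    exact_mod_cast (by linarith : φ (nF m) * (s : ℤ) = φ u * (kF m : ℤ))
  have hψι : ∀ u : N, ψ (ι u) = φ u := by
    intro u
    rw [hψ_eq (ι u) 1 u one_pos (by rw [pow_one])]
    simp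
  -- ψ is additive
  have hψ_add : ∀ m m' : M, ψ (m * m') = ψ m + ψ m' := by
    intro m m'
    set t := kF (m * m') with ht
    set u := nF (m * m') with hu
    set k := kF m with hk
    set n := nF m with hn
    set k' := kF m' with hk'
    set n' := nF m' with hn'
    set w : N := u ^ (k * k') * (n'⁻¹) ^ (t * k) * (n⁻¹) ^ (t * k') with hw
    have hιw : ι w ∈ commutator M := by
      set χ : N →* Abelianization M := Abelianization.of.comp ι with hχ
      have hab : Abelianization.of (ι w) = 1 := by
        show χ w = 1
        set α := Abelianization.of m with hα
        set β := Abelianization.of m' with hβ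
        have a1 : χ u = α ^ t * β ^ t := by
          show Abelianization.of (ι u) = _
          rw [hnF (m * m'), map_pow, map_mul, mul_pow]
        have a2 : χ n = α ^ k := by
          show Abelianization.of (ι n) = _
          rw [hnF m, map_pow]
        have a3 : χ n' = β ^ k' := by
          show Abelianization.of (ι n') = _
          rw [hnF m', map_pow]
        rw [hw, map_mul, map_mul, map_pow, map_pow, map_pow, map_inv, map_inv,
          a1, a2, a3]
        rw [mul_pow, ← pow_mul, ← pow_mul, inv_pow, inv_pow, ← pow_mul, ← pow_mul]
        rw [show k' * (t * k) = t * (k * k') by ring, show k * (t * k') = t * (k * k') by ring]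
        group
      exact (QuotientGroup.eq_one_iff (ι w)).mp hab
    obtain ⟨s, hs, yc, hyc, hws⟩ := malcev_key hι hιw
    have hwcomm : w ^ s ∈ commutator N := by
      have : w ^ s = yc := hι.injective (by rw [map_pow, hws])
      rw [this]; exact hyc
    have hφw : φ w = 0 := hφvan w ⟨s, hs, hwcomm⟩
    have e3 : ((k : ℤ) * k') * φ u - ((t : ℤ) * k) * φ n' - ((t : ℤ) * k') * φ n = 0 := by
      rw [hw, hφadd, hφadd, hφpow, hφpow, hφpow, hφinv, hφinv] at hφw
      push_cast at hφw ⊢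
      linarith
    have hψmm : ψ (m * m') = (φ u : ℚ) / t := hψ_eq (m * m') t u (hkF (m * m')) (hnF (m * m'))
    have hψm : ψ m = (φ n : ℚ) / k := rfl
    have hψm' : ψ m' = (φ n' : ℚ) / k' := rfl
    rw [hψmm, hψm, hψm']
    have ht0 : ((t : ℚ)) ≠ 0 := hkQ (m * m')
    have hk0 : ((k : ℚ)) ≠ 0 := hkQ m
    have hk0' : ((k' : ℚ)) ≠ 0 := hkQ m'
    rw [div_add_div _ _ hk0 hk0', div_eq_div_iff ht0 (mul_ne_zero hk0 hk0')]
    have e4 : ((k : ℚ) * k') * (φ u : ℚ) - ((t : ℚ) * k) * (φ n' : ℚ)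
        - ((t : ℚ) * k') * (φ n : ℚ) = 0 := by exact_mod_cast e3
    linear_combination e4
  have hψone : ψ 1 = 0 := by
    have := hψ_add 1 1
    simp at this
    linarith
  have hψpow : ∀ (m : M) (a : ℕ), ψ (m ^ a) = (a : ℚ) * ψ m := by
    intro m a
    induction a with
    | zero => simpa using hψone
    | succ a ih => rw [pow_succ, hψ_add, ih]; push_cast; ring
  have hψinv : ∀ m : M, ψ m⁻¹ = - ψ m := by
    intro m
    have h := hψ_add m m⁻¹
    rw [mul_inv_cancel, hψone] at h
    linarith
  have hψzpow : ∀ (m : M) (j : ℤ), ψ (m ^ j) = (j : ℚ) * ψ m := by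
    intro m j
    cases j with
    | ofNat a => rw [Int.ofNat_eq_coe, zpow_natCast, hψpow]; push_cast; ring
    | negSucc a =>
      rw [zpow_negSucc, hψinv, hψpow]
      push_cast
      ring
  -- the subgroups A and B
  have hAc : ∀ x : M, (∃ (k : ℕ) (j : ℤ), 0 < k ∧ x ^ k = ζ ^ j) → ∀ g : M, Commute x g := by
    rintro x ⟨k, j, hk, hxk⟩ g
    have h1 : (g * x * g⁻¹) ^ k = x ^ k := by
      rw [conj_pow_eq, hxk]
      have : Commute (ζ ^ j) g := (hζc g).zpow_left j
      calc g * ζ ^ j * g⁻¹ = (ζ ^ j) * g * g⁻¹ := by rw [← this.eq]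
        _ = ζ ^ j := by group
    have h2 : g * x * g⁻¹ = x := pow_left_inj' hι hk h1
    show x * g = g * x
    calc x * g = (g * x * g⁻¹) * g := by rw [h2]
      _ = g * x := by group
  let A : Subgroup M :=
    { carrier := {x | ∃ (k : ℕ) (j : ℤ), 0 < k ∧ x ^ k = ζ ^ j}
      one_mem' := ⟨1, 0, one_pos, by simp⟩
      mul_mem' := by
        rintro x y ⟨k, j, hk, hxk⟩ ⟨l, i, hl, hyl⟩
        have hcomm : Commute x y := hAc x ⟨k, j, hk, hxk⟩ y
        refine ⟨k * l, j * l + i * k, Nat.mul_pos hk hl, ?_⟩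
        rw [hcomm.mul_pow]
        have ex : x ^ (k * l) = ζ ^ (j * l) := by
          rw [pow_mul, hxk, ← zpow_natCast (ζ ^ j) l, ← zpow_mul]
        have ey : y ^ (k * l) = ζ ^ (i * k) := by
          rw [mul_comm k l, pow_mul, hyl, ← zpow_natCast (ζ ^ i) k, ← zpow_mul]
        rw [ex, ey, ← zpow_add]
      inv_mem' := by
        rintro x ⟨k, j, hk, hxk⟩
        exact ⟨k, -j, hk, by rw [inv_pow, hxk, zpow_neg]⟩ }
  let B : Subgroup M :=
    { carrier := {m | ψ m = 0}
      one_mem' := hψone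
      mul_mem' := by
        rintro x y hx hy
        show ψ (x * y) = 0
        rw [hψ_add, hx, hy, add_zero]
      inv_mem' := by
        rintro x hx
        show ψ x⁻¹ = 0
        rw [hψinv, hx, neg_zero] }
  have hζA : ζ ∈ A := ⟨1, 1, one_pos, by simp⟩
  have hψζ : ψ ζ = (φ z : ℚ) := hψι z
  have hφzQ : (φ z : ℚ) ≠ 0 := Int.cast_ne_zero.mpr hφz
  -- A ∩ B is trivial
  have hAB : ∀ x : M, x ∈ A → x ∈ B → x = 1 := by
    rintro x ⟨k, j, hk, hxk⟩ hxB
    have hx0 : ψ x = 0 := hxB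
    have h1 : (k : ℚ) * ψ x = (j : ℚ) * ψ ζ := by
      rw [← hψpow, ← hψzpow, hxk]
    rw [hx0, mul_zero, hψζ] at h1
    have hj : j = 0 := by
      by_contra hj0
      exact hφzQ (by
        have := h1.symm
        rcases mul_eq_zero.mp this with h | h
        · exact absurd (by exact_mod_cast h) hj0
        · exact h)
    rw [hj, zpow_zero] at hxk
    exact hTF x k hk hxk
  -- every element decomposes as a product
  have hdecomp : ∀ m : M, ∃ a ∈ A, ∃ b ∈ B, m = a * b := by
    intro m
    set c := ψ m with hc
    set s := c / (φ z : ℚ) with hs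
    obtain ⟨a, ha, -⟩ := hι.uniqueRoots (ζ ^ s.num) s.den s.pos
    have haA : a ∈ A := ⟨s.den, s.num, s.pos, ha⟩
    have hψa : ψ a = c := by
      have h1 : (s.den : ℚ) * ψ a = (s.num : ℚ) * ψ ζ := by
        rw [← hψpow, ← hψzpow, ha]
      have hden : ((s.den : ℚ)) ≠ 0 := Nat.cast_ne_zero.mpr s.pos.ne'
      have h2 : ψ a = ((s.num : ℚ) / s.den) * ψ ζ := by
        field_simp at h1 ⊢
        linarith
      rw [h2, Rat.num_div_den, hψζ, hs]
      field_simp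
    refine ⟨a, haA, a⁻¹ * m, ?_, by group⟩
    show ψ (a⁻¹ * m) = 0
    rw [hψ_add, hψinv, hψa]
    simp [hc]
  -- the product isomorphism
  have habcomm : ∀ (a : ↥A) (b : ↥B), (a : M) * b = b * a :=
    fun a b => (hAc a a.2 b).eq
  let F : ↥A × ↥B →* M :=
    { toFun := fun p => (p.1 : M) * (p.2 : M)
      map_one' := by simp
      map_mul' := by
        rintro ⟨a, b⟩ ⟨a', b'⟩
        show ((a * a' : ↥A) : M) * ((b * b' : ↥B) : M) = ((a : M) * b) * ((a' : M) * b')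
        rw [Subgroup.coe_mul, Subgroup.coe_mul]
        have hc : (a' : M) * (b : M) = (b : M) * (a' : M) := habcomm a' b
        calc (a : M) * a' * ((b : M) * b') = (a : M) * ((a' : M) * (b : M)) * b' := by group
          _ = (a : M) * ((b : M) * (a' : M)) * b' := by rw [hc]
          _ = ((a : M) * b) * ((a' : M) * b') := by group }
  have hFinj : Function.Injective F := by
    rintro ⟨a, b⟩ ⟨a', b'⟩ h
    have h1 : (a : M) * b = (a' : M) * b' := h
    have h2 : ((a' : M))⁻¹ * a = (b' : M) * (b : M)⁻¹ := by
      calc ((a' : M))⁻¹ * a = ((a' : M))⁻¹ * ((a : M) * b) * (b : M)⁻¹ := by group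
        _ = ((a' : M))⁻¹ * ((a' : M) * b') * (b : M)⁻¹ := by rw [h1]
        _ = (b' : M) * (b : M)⁻¹ := by group
    have hmem : ((a' : M))⁻¹ * a = 1 := by
      refine hAB _ (mul_mem (inv_mem a'.2) a.2) ?_
      rw [h2]
      exact mul_mem b'.2 (inv_mem b.2)
    have ha : (a : M) = a' := by
      have := hmem
      group at this
      -- (a')⁻¹ * a = 1 → a = a'
      rw [inv_mul_eq_one] at hmem
      exact hmem.symm
    have hb : (b : M) = b' := by
      rw [h2] at hmem
      have : (b' : M) = (b : M) := by
        have h3 := hmem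
        rw [mul_inv_eq_one] at h3
        exact h3
      exact this.symm
    exact Prod.ext (Subtype.ext ha) (Subtype.ext hb)
  have hFsurj : Function.Surjective F := by
    intro m
    obtain ⟨a, haA, b, hbB, hm⟩ := hdecomp m
    exact ⟨(⟨a, haA⟩, ⟨b, hbB⟩), hm.symm⟩
  let E : M ≃* ↥A × ↥B := (MulEquiv.ofBijective F ⟨hFinj, hFsurj⟩).symm
  have hA_ab : ∀ a b : ↥A, a * b = b * a := by
    intro a b
    ext
    exact (hAc (a : M) a.2 (b : M)).eq
  have hsub : Subsingleton ↥A :=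
    hno ↥A ↥B inferInstance inferInstance ⟨E⟩ hA_ab
  have : (⟨ζ, hζA⟩ : ↥A) = ⟨1, A.one_mem⟩ := Subsingleton.elim _ _
  have hζ1 : ζ = 1 := congrArg Subtype.val this
  have hz1 : z = 1 := hι.injective (by rw [← hζdef, hζ1, map_one])
  exact hcon ⟨1, one_pos, by rw [hz1]; simpa using Subgroup.one_mem (commutator N)⟩
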